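/- Let f be nonnegative and nondecreasing with f(0) = 0. For any rooted binary tree T on vertex set V of weighted graph G with n = |V| ≥ 2, there is a partition (A, B) of V with n/3 ≤ |A|, |B| ≤ 2n/3 such that w(A,B)/min(f(|A|), f(|B|)) ≤ cost_f(T)/(f(⌊2n/3⌋)·f(⌈n/3⌉)). -/

import Mathlib

open Finset

/-- A rooted binary tree whose leaves are labeled by elements of `Fin n`. -/
inductive HTree (n : ℕ) : Type where
  | leaf : Fin n → HTree n
  | node : HTree n → HTree n → HTree n

namespace HTree

variable {n : ℕ}

/-- The list of leaf labels, left to right. -/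
def leafList : HTree n → List (Fin n)
  | .leaf v => [v]
  | .node l r => l.leafList ++ r.leafList

/-- The set of leaf labels of a tree. -/
def leaves (T : HTree n) : Finset (Fin n) := T.leafList.toFinset

/-- `T` is a hierarchical clustering tree of the whole vertex set `Fin n`:
its leaves are in one-to-one correspondence with `Fin n`. -/
def IsFullTree (T : HTree n) : Prop := T.leafList.Nodup ∧ T.leaves = Finset.univ

/-- `|leaves(T[i ∨ j])|`: the number of leaves of the subtree rooted at the
lowest common ancestor of leaves `i` and `j`. -/
def lcaSize : HTree n → Fin n → Fin n → ℕ
  | .leaf _, _, _ => 1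
  | .node l r, i, j =>
    if i ∈ l.leaves ∧ j ∈ l.leaves then l.lcaSize i j
    else if i ∈ r.leaves ∧ j ∈ r.leaves then r.lcaSize i j
    else (l.leaves ∪ r.leaves).card

/-- `cost_G(T) = Σ_{{i,j}} w_{ij} |leaves(T[i ∨ j])|`, the sum being over
unordered pairs (represented as ordered pairs `p.1 < p.2`). -/
def pairCost (w : Fin n → Fin n → ℝ) (T : HTree n) : ℝ :=
  ∑ p ∈ Finset.univ.filter (fun p : Fin n × Fin n => p.1 < p.2),
    w p.1 p.2 * (T.lcaSize p.1 p.2 : ℝ)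

/-- `w(A, B)`: total weight of edges between `A` and `B`. -/
def cut (w : Fin n → Fin n → ℝ) (A B : Finset (Fin n)) : ℝ :=
  ∑ i ∈ A, ∑ j ∈ B, w i j

/-- The sum-of-splits formulation of the cost:
`Σ over internal splits S → (S₁,S₂) of |S| ⬝ w(S₁,S₂)`. -/
def splitCost (w : Fin n → Fin n → ℝ) : HTree n → ℝ
  | .leaf _ => 0
  | .node l r =>
      ((l.leaves ∪ r.leaves).card : ℝ) * cut w l.leaves r.leaves
        + splitCost w l + splitCost w r

/-- `Subtree t T`: `t` occurs as a subtree of `T`. -/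
inductive Subtree : HTree n → HTree n → Prop
  | refl (t : HTree n) : Subtree t t
  | left {t l r : HTree n} : Subtree t l → Subtree t (.node l r)
  | right {t l r : HTree n} : Subtree t r → Subtree t (.node l r)

end HTree

namespace HTree

/-- Generalized sum-of-splits cost: `Σ over splits S → (S₁,S₂) of f(|S|) w(S₁,S₂)`. -/
def splitCostF (f : ℕ → ℝ) (w : Fin n → Fin n → ℝ) : HTree n → ℝ
  | .leaf _ => 0
  | .node l r =>
      f ((l.leaves ∪ r.leaves).card) * cut w l.leaves r.leaves
        + splitCostF f w l + splitCostF f w r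

end HTree

namespace HTree

variable {n : ℕ}

lemma leaves_node (l r : HTree n) : (HTree.node l r).leaves = l.leaves ∪ r.leaves := by
  simp [leaves, leafList]

lemma leafList_sublist {t T : HTree n} (h : Subtree t T) :
    t.leafList.Sublist T.leafList := by
  induction h with
  | refl => exact List.Sublist.refl _
  | left _ ih => exact ih.trans (by simpa [leafList] using List.sublist_append_left _ _)
  | right _ ih => exact ih.trans (by simpa [leafList] using List.sublist_append_right _ _)

lemma leaves_subset {t T : HTree n} (h : Subtree t T) : t.leaves ⊆ T.leaves := by
  intro x hx
  simp only [leaves, List.mem_toFinset] at hx ⊢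
  exact (leafList_sublist h).mem hx

lemma nodup_of_subtree {t T : HTree n} (h : Subtree t T) (hT : T.leafList.Nodup) :
    t.leafList.Nodup := hT.sublist (leafList_sublist h)

lemma subtree_trans {a b c : HTree n} (h1 : Subtree a b) (h2 : Subtree b c) :
    Subtree a c := by
  induction h2 with
  | refl => exact h1
  | left _ ih => exact Subtree.left ih
  | right _ ih => exact Subtree.right ih

lemma disjoint_leaves {l r : HTree n} (h : (HTree.node l r).leafList.Nodup) :
    Disjoint l.leaves r.leaves := by
  simp only [leafList, List.nodup_append] at h
  exact List.disjoint_toFinset_iff_disjoint.2 (by intro a ha hb; exact h.2.2 a ha a hb rfl)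

lemma cut_nonneg (w : Fin n → Fin n → ℝ) (hnonneg : ∀ i j, 0 ≤ w i j)
    (A B : Finset (Fin n)) : 0 ≤ cut w A B :=
  Finset.sum_nonneg fun _ _ => Finset.sum_nonneg fun _ _ => hnonneg _ _

lemma cut_comm (w : Fin n → Fin n → ℝ) (hsymm : ∀ i j, w i j = w j i)
    (A B : Finset (Fin n)) : cut w A B = cut w B A := by
  rw [cut, cut, Finset.sum_comm]
  exact Finset.sum_congr rfl fun i _ => Finset.sum_congr rfl fun j _ => hsymm _ _

lemma cut_mono_left (w : Fin n → Fin n → ℝ) (hnonneg : ∀ i j, 0 ≤ w i j)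
    {A A' : Finset (Fin n)} (h : A ⊆ A') (B : Finset (Fin n)) :
    cut w A B ≤ cut w A' B :=
  Finset.sum_le_sum_of_subset_of_nonneg h fun i _ _ =>
    Finset.sum_nonneg fun j _ => hnonneg i j

lemma cut_union_right (w : Fin n → Fin n → ℝ) (A : Finset (Fin n))
    {B C : Finset (Fin n)} (h : Disjoint B C) :
    cut w A (B ∪ C) = cut w A B + cut w A C := by
  simp only [cut, Finset.sum_union h, Finset.sum_add_distrib]

lemma splitCostF_nonneg (f : ℕ → ℝ) (hfnn : ∀ m, 0 ≤ f m)
    (w : Fin n → Fin n → ℝ) (hnonneg : ∀ i j, 0 ≤ w i j) (T : HTree n) :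
    0 ≤ splitCostF f w T := by
  induction T with
  | leaf v => simp [splitCostF]
  | node l r ihl ihr =>
    have := cut_nonneg w hnonneg l.leaves r.leaves
    have := hfnn ((l.leaves ∪ r.leaves).card)
    simp only [splitCostF]
    positivity

/-- Key lemma: the cut separating one child of a subtree of size `≥ M` from the
rest of the tree's leaves is charged against the split cost with factor `f M`. -/
lemma key_lemma (f : ℕ → ℝ) (hfnn : ∀ m, 0 ≤ f m) (hfmono : Monotone f)
    (w : Fin n → Fin n → ℝ) (hsymm : ∀ i j, w i j = w j i)
    (hnonneg : ∀ i j, 0 ≤ w i j) (M : ℕ) :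
    ∀ (T l r : HTree n) (A : Finset (Fin n)), Subtree (.node l r) T →
      T.leafList.Nodup → (A = l.leaves ∨ A = r.leaves) →
      M ≤ (l.leaves ∪ r.leaves).card →
      f M * cut w A (T.leaves \ A) ≤ splitCostF f w T := by
  intro T
  induction T with
  | leaf v =>
    intro l r A hsub
    cases hsub
  | node tl tr ihl ihr =>
    intro l r A hsub hnd hA hM
    have hndl : tl.leafList.Nodup :=
      nodup_of_subtree (Subtree.left (Subtree.refl tl)) hnd
    have hndr : tr.leafList.Nodup :=
      nodup_of_subtree (Subtree.right (Subtree.refl tr)) hnd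
    have hdisj : Disjoint tl.leaves tr.leaves := disjoint_leaves hnd
    have hcostl := splitCostF_nonneg f hfnn w hnonneg tl
    have hcostr := splitCostF_nonneg f hfnn w hnonneg tr
    have hleaves : (HTree.node tl tr).leaves = tl.leaves ∪ tr.leaves := leaves_node tl tr
    cases hsub with
    | refl =>
      -- here tl = l, tr = r, A is one of the two leaf sets
      have hcut : cut w A ((tl.leaves ∪ tr.leaves) \ A) = cut w tl.leaves tr.leaves := by
        rcases hA with h | h <;> subst h
        · rw [Finset.union_sdiff_cancel_left hdisj]
        · rw [Finset.union_sdiff_cancel_right hdisj, cut_comm w hsymm]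
      have hfM : f M ≤ f ((tl.leaves ∪ tr.leaves).card) := hfmono hM
      have hcnn : 0 ≤ cut w tl.leaves tr.leaves := cut_nonneg w hnonneg _ _
      simp only [splitCostF, hleaves, hcut]
      nlinarith [mul_le_mul_of_nonneg_right hfM hcnn]
    | left hsub' =>
      -- node l r is inside tl
      have hAsub : A ⊆ tl.leaves := by
        have h1 : (HTree.node l r).leaves ⊆ tl.leaves := leaves_subset hsub'
        rw [leaves_node] at h1
        rcases hA with h | h <;> subst h
        · exact (Finset.subset_union_left).trans h1
        · exact (Finset.subset_union_right).trans h1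
      have hAdisj : Disjoint A tr.leaves := hdisj.mono_left hAsub
      have hsd : (tl.leaves ∪ tr.leaves) \ A = (tl.leaves \ A) ∪ tr.leaves := by
        rw [Finset.union_sdiff_distrib, (Finset.sdiff_eq_self_iff_disjoint).2 hAdisj.symm]
      have hdisj2 : Disjoint (tl.leaves \ A) tr.leaves := hdisj.mono_left (Finset.sdiff_subset)
      have hcard : M ≤ (tl.leaves ∪ tr.leaves).card := by
        refine hM.trans (Finset.card_le_card ?_)
        have h1 : (HTree.node l r).leaves ⊆ tl.leaves := leaves_subset hsub'
        rw [leaves_node] at h1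
        exact h1.trans Finset.subset_union_left
      have hih : f M * cut w A (tl.leaves \ A) ≤ splitCostF f w tl := by
        refine ihl l r A hsub' hndl hA hM
      have h2 : f M * cut w A tr.leaves ≤
          f ((tl.leaves ∪ tr.leaves).card) * cut w tl.leaves tr.leaves := by
        have := cut_mono_left w hnonneg hAsub tr.leaves
        have hcnn : 0 ≤ cut w A tr.leaves := cut_nonneg w hnonneg _ _
        exact mul_le_mul (hfmono hcard) this hcnn (hfnn _)
      simp only [splitCostF, hleaves, hsd, cut_union_right w A hdisj2]
      nlinarith
    | right hsub' =>
      have hAsub : A ⊆ tr.leaves := by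
        have h1 : (HTree.node l r).leaves ⊆ tr.leaves := leaves_subset hsub'
        rw [leaves_node] at h1
        rcases hA with h | h <;> subst h
        · exact (Finset.subset_union_left).trans h1
        · exact (Finset.subset_union_right).trans h1
      have hAdisj : Disjoint A tl.leaves := hdisj.symm.mono_left hAsub
      have hsd : (tl.leaves ∪ tr.leaves) \ A = tl.leaves ∪ (tr.leaves \ A) := by
        rw [Finset.union_sdiff_distrib, (Finset.sdiff_eq_self_iff_disjoint).2 hAdisj.symm]
      have hdisj2 : Disjoint tl.leaves (tr.leaves \ A) := hdisj.mono_right (Finset.sdiff_subset)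
      have hcard : M ≤ (tl.leaves ∪ tr.leaves).card := by
        refine hM.trans (Finset.card_le_card ?_)
        have h1 : (HTree.node l r).leaves ⊆ tr.leaves := leaves_subset hsub'
        rw [leaves_node] at h1
        exact h1.trans Finset.subset_union_right
      have hih : f M * cut w A (tr.leaves \ A) ≤ splitCostF f w tr := by
        refine ihr l r A hsub' hndr hA hM
      have h2 : f M * cut w A tl.leaves ≤
          f ((tl.leaves ∪ tr.leaves).card) * cut w tl.leaves tr.leaves := by
        have h3 : cut w A tl.leaves ≤ cut w tr.leaves tl.leaves :=
          cut_mono_left w hnonneg hAsub tl.leaves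
        rw [cut_comm w hsymm tr.leaves tl.leaves] at h3
        have hcnn : 0 ≤ cut w A tl.leaves := cut_nonneg w hnonneg _ _
        exact mul_le_mul (hfmono hcard) h3 hcnn (hfnn _)
      simp only [splitCostF, hleaves, hsd, cut_union_right w A hdisj2]
      nlinarith

/-- Descend lemma: below any sufficiently big subtree there is a node of size
`> 2n/3` both of whose children have size `≤ 2n/3`. -/
lemma descend (hn : 2 ≤ n) :
    ∀ (t T : HTree n), Subtree t T → 2 * n < 3 * t.leaves.card →
      ∃ l r, Subtree (.node l r) T ∧ 2 * n < 3 * (l.leaves ∪ r.leaves).card ∧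
        3 * l.leaves.card ≤ 2 * n ∧ 3 * r.leaves.card ≤ 2 * n := by
  intro t
  induction t with
  | leaf v =>
    intro T _ hbig
    simp [leaves, leafList] at hbig
    omega
  | node l r ihl ihr =>
    intro T hsub hbig
    by_cases hl : 2 * n < 3 * l.leaves.card
    · exact ihl T (subtree_trans (Subtree.left (Subtree.refl l)) hsub) hl
    · by_cases hr : 2 * n < 3 * r.leaves.card
      · exact ihr T (subtree_trans (Subtree.right (Subtree.refl r)) hsub) hr
      · rw [leaves_node] at hbig
        exact ⟨l, r, hsub, hbig, by omega, by omega⟩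

end HTree

/-- Generalized sparsest-cut lemma: for any full tree `T` there is a balanced
partition `(A, Aᶜ)` with `n/3 ≤ |A|, |Aᶜ| ≤ 2n/3` and
`w(A,Aᶜ)/min(f|A|, f|Aᶜ|) ≤ cost_f(T)/(f(⌊2n/3⌋) f(⌈n/3⌉))`. -/
theorem exists_sparse_cut_generalized (n : ℕ) (hn : 2 ≤ n)
    (f : ℕ → ℝ) (hf0 : f 0 = 0) (hfnn : ∀ m, 0 ≤ f m) (hfmono : Monotone f)
    (hfpos : 0 < f ((n + 2) / 3))
    (w : Fin n → Fin n → ℝ) (hsymm : ∀ i j, w i j = w j i)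
    (hnonneg : ∀ i j, 0 ≤ w i j)
    (T : HTree n) (hT : T.IsFullTree) :
    ∃ A : Finset (Fin n),
      (n : ℝ) / 3 ≤ A.card ∧ (A.card : ℝ) ≤ 2 * n / 3 ∧
      (n : ℝ) / 3 ≤ Aᶜ.card ∧ ((Aᶜ.card : ℝ)) ≤ 2 * n / 3 ∧
      HTree.cut w A Aᶜ / min (f A.card) (f Aᶜ.card)
        ≤ T.splitCostF f w / (f ((2 * n) / 3) * f ((n + 2) / 3)) := by
  obtain ⟨hnd, huniv⟩ := hT
  have hcardT : T.leaves.card = n := by rw [huniv]; simp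
  obtain ⟨l, r, hsub, hbig, hl, hr⟩ :=
    HTree.descend hn T T (HTree.Subtree.refl T) (by omega)
  have hndlr : (HTree.node l r).leafList.Nodup := HTree.nodup_of_subtree hsub hnd
  have hdisj := HTree.disjoint_leaves hndlr
  have hcardu : (l.leaves ∪ r.leaves).card = l.leaves.card + r.leaves.card :=
    Finset.card_union_of_disjoint hdisj
  obtain ⟨A, hA, hA1, hA2⟩ : ∃ A : Finset (Fin n),
      (A = l.leaves ∨ A = r.leaves) ∧ n < 3 * A.card ∧ 3 * A.card ≤ 2 * n := by
    by_cases hc : l.leaves.card ≤ r.leaves.card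
    · exact ⟨r.leaves, Or.inr rfl, by omega, hr⟩
    · exact ⟨l.leaves, Or.inl rfl, by omega, hl⟩
  have hcompl : Aᶜ.card = n - A.card := by
    rw [Finset.card_compl, Fintype.card_fin]
  have hAn : A.card ≤ n := by omega
  refine ⟨A, ?_, ?_, ?_, ?_, ?_⟩
  · rw [div_le_iff₀ (by norm_num : (0:ℝ) < 3)]
    exact_mod_cast (by omega : n ≤ A.card * 3)
  · rw [le_div_iff₀ (by norm_num : (0:ℝ) < 3)]
    exact_mod_cast (by omega : A.card * 3 ≤ 2 * n)
  · rw [div_le_iff₀ (by norm_num : (0:ℝ) < 3)]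
    exact_mod_cast (by omega : n ≤ Aᶜ.card * 3)
  · rw [le_div_iff₀ (by norm_num : (0:ℝ) < 3)]
    exact_mod_cast (by omega : Aᶜ.card * 3 ≤ 2 * n)
  · set M := (2 * n) / 3 with hM
    set K := (n + 2) / 3 with hK
    have hMle : M ≤ (l.leaves ∪ r.leaves).card := by omega
    have hkey := HTree.key_lemma f hfnn hfmono w hsymm hnonneg M T l r A hsub hnd hA hMle
    have hTA : T.leaves \ A = Aᶜ := by
      rw [huniv, ← Finset.compl_eq_univ_sdiff]
    rw [hTA] at hkey
    have hfM : 0 < f M := lt_of_lt_of_le hfpos (hfmono (by omega : K ≤ M))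
    have hminK : f K ≤ min (f A.card) (f Aᶜ.card) :=
      le_min (hfmono (by omega : K ≤ A.card)) (hfmono (by omega : K ≤ Aᶜ.card))
    have hminpos : 0 < min (f A.card) (f Aᶜ.card) := lt_of_lt_of_le hfpos hminK
    have hcnn : 0 ≤ HTree.cut w A Aᶜ := HTree.cut_nonneg w hnonneg _ _
    have hCnn : 0 ≤ T.splitCostF f w := HTree.splitCostF_nonneg f hfnn w hnonneg T
    rw [div_le_div_iff₀ hminpos (mul_pos hfM hfpos)]
    nlinarith [mul_le_mul_of_nonneg_right hkey (hfnn K),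
      mul_le_mul_of_nonneg_left hminK hCnn]
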